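/- Let μᵣ and μₛ be two probability measures on the same measurable space Ω, f a labeling function, and h₁, h₂ hypotheses. Define εᵣ(h) = μᵣ({x : h(x) ≠ f(x)}), εₛ(h) = μₛ({x : h(x) ≠ f(x)}), Δεᵣ = εᵣ(h₂) − εᵣ(h₁), Δεₛ = εₛ(h₂) − εₛ(h₁). Let A = {x : h₁(x) ≠ h₂(x) ∧ (h₁(x) ≠ f(x) ∨ h₂(x) ≠ f(x))}, and let δ_A = |μᵣ − μₛ|(A) be the total variation of the signed measure μᵣ − μₛ restricted to A. Then Δεᵣ ≥ Δεₛ − δ_A. -/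

import Mathlib

open MeasureTheory Set

lemma signed_apply_eq {Ω : Type*} [MeasurableSpace Ω]
    (μr μs : Measure Ω) [IsFiniteMeasure μr] [IsFiniteMeasure μs]
    {s : Set Ω} (hs : MeasurableSet s) :
    (μr s).toReal - (μs s).toReal =
      ((μr.toSignedMeasure - μs.toSignedMeasure).toJordanDecomposition.posPart s).toReal -
      ((μr.toSignedMeasure - μs.toSignedMeasure).toJordanDecomposition.negPart s).toReal := by
  set ν := μr.toSignedMeasure - μs.toSignedMeasure
  have h1 : ν s = (μr s).toReal - (μs s).toReal := by
    simp [ν, VectorMeasure.sub_apply, Measure.toSignedMeasure_apply_measurable hs, hs, Measure.real]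
  have h2 : ν.toJordanDecomposition.toSignedMeasure s =
      (ν.toJordanDecomposition.posPart s).toReal -
      (ν.toJordanDecomposition.negPart s).toReal := by
    rw [JordanDecomposition.toSignedMeasure]
    simp [VectorMeasure.sub_apply, Measure.toSignedMeasure_apply_measurable hs, hs, Measure.real]
  rw [← h1, ← h2, SignedMeasure.toSignedMeasure_toJordanDecomposition]

theorem risk_diff_lower_bound {Ω Y : Type*} [MeasurableSpace Ω]
    (μr μs : Measure Ω) [IsProbabilityMeasure μr] [IsProbabilityMeasure μs]
    (f h₁ h₂ : Ω → Y)
    (hm1 : MeasurableSet {x | h₁ x ≠ f x})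
    (hm2 : MeasurableSet {x | h₂ x ≠ f x})
    (hm12 : MeasurableSet {x | h₁ x ≠ h₂ x}) :
    (μr {x | h₂ x ≠ f x}).toReal - (μr {x | h₁ x ≠ f x}).toReal ≥
      ((μs {x | h₂ x ≠ f x}).toReal - (μs {x | h₁ x ≠ f x}).toReal) -
        ((μr.toSignedMeasure - μs.toSignedMeasure).totalVariation
          {x | h₁ x ≠ h₂ x ∧ (h₁ x ≠ f x ∨ h₂ x ≠ f x)}).toReal := by
  set E₁ := {x | h₁ x ≠ f x} with hE₁
  set E₂ := {x | h₂ x ≠ f x} with hE₂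
  set A := {x | h₁ x ≠ h₂ x ∧ (h₁ x ≠ f x ∨ h₂ x ≠ f x)} with hA
  set ν := μr.toSignedMeasure - μs.toSignedMeasure
  set p := ν.toJordanDecomposition.posPart with hp
  set n := ν.toJordanDecomposition.negPart with hn
  have hAm : MeasurableSet A := by
    have : A = {x | h₁ x ≠ h₂ x} ∩ (E₁ ∪ E₂) := by
      ext x; simp [hA, hE₁, hE₂, and_or_left]
    rw [this]; exact hm12.inter (hm1.union hm2)
  have hS1m : MeasurableSet (E₂ \ E₁) := hm2.diff hm1
  have hS2m : MeasurableSet (E₁ \ E₂) := hm1.diff hm2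
  have hS1A : E₂ \ E₁ ⊆ A := by
    rintro x ⟨hx2, hx1⟩
    simp only [hE₁, mem_setOf_eq, not_not] at hx1
    exact ⟨fun h => hx2 (h.symm.trans hx1), Or.inr hx2⟩
  have hS2A : E₁ \ E₂ ⊆ A := by
    rintro x ⟨hx1, hx2⟩
    simp only [hE₂, mem_setOf_eq, not_not] at hx2
    exact ⟨fun h => hx1 (h.trans hx2), Or.inl hx1⟩
  have hdisj : Disjoint (E₂ \ E₁) (E₁ \ E₂) := disjoint_sdiff_sdiff
  -- total variation bound
  have htv : p (E₂ \ E₁) + n (E₂ \ E₁) + (p (E₁ \ E₂) + n (E₁ \ E₂)) ≤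
      ν.totalVariation A := by
    have h1 : ν.totalVariation (E₂ \ E₁) = p (E₂ \ E₁) + n (E₂ \ E₁) := rfl
    have h2 : ν.totalVariation (E₁ \ E₂) = p (E₁ \ E₂) + n (E₁ \ E₂) := rfl
    rw [← h1, ← h2, ← measure_union hdisj hS2m]
    exact measure_mono (union_subset hS1A hS2A)
  -- finiteness
  have hfin : ∀ (m : Measure Ω) [IsFiniteMeasure m] (s : Set Ω), m s ≠ ⊤ :=
    fun m _ s => measure_ne_top m s
  -- decompose measures over E₂ = (E₂∩E₁) ∪ (E₂\E₁), E₁ = (E₁∩E₂) ∪ (E₁\E₂)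
  have key : ∀ (m : Measure Ω) [IsFiniteMeasure m],
      (m E₂).toReal - (m E₁).toReal = (m (E₂ \ E₁)).toReal - (m (E₁ \ E₂)).toReal := by
    intro m _
    have d2 : (m (E₂ \ E₁)).toReal = (m E₂).toReal - (m (E₂ ∩ E₁)).toReal := by
      rw [← diff_self_inter, measure_diff inter_subset_left
        (hm2.inter hm1).nullMeasurableSet (measure_ne_top m _),
        ENNReal.toReal_sub_of_le (measure_mono inter_subset_left) (measure_ne_top m _)]
    have d1 : (m (E₁ \ E₂)).toReal = (m E₁).toReal - (m (E₁ ∩ E₂)).toReal := by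
      rw [← diff_self_inter, measure_diff inter_subset_left
        (hm1.inter hm2).nullMeasurableSet (measure_ne_top m _),
        ENNReal.toReal_sub_of_le (measure_mono inter_subset_left) (measure_ne_top m _)]
    rw [d2, d1, inter_comm]
    ring
  have keyr := key μr
  have keys := key μs
  have e1 : (μr (E₂ \ E₁)).toReal - (μs (E₂ \ E₁)).toReal =
      (p (E₂ \ E₁)).toReal - (n (E₂ \ E₁)).toReal := signed_apply_eq μr μs hS1m
  have e2 : (μr (E₁ \ E₂)).toReal - (μs (E₁ \ E₂)).toReal =
      (p (E₁ \ E₂)).toReal - (n (E₁ \ E₂)).toReal := signed_apply_eq μr μs hS2m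
  -- real arithmetic
  have htvr : (p (E₂ \ E₁)).toReal + (n (E₂ \ E₁)).toReal +
      ((p (E₁ \ E₂)).toReal + (n (E₁ \ E₂)).toReal) ≤ (ν.totalVariation A).toReal := by
    have := ENNReal.toReal_mono ?_ htv
    · rwa [ENNReal.toReal_add (by finiteness) (by finiteness),
        ENNReal.toReal_add (by finiteness) (by finiteness),
        ENNReal.toReal_add (by finiteness) (by finiteness)] at this
    · exact fun h => absurd h (by
        simp only [SignedMeasure.totalVariation, Measure.add_apply]
        finiteness)
  have pos : ∀ (m : Measure Ω) (s : Set Ω), 0 ≤ (m s).toReal := fun m s => ENNReal.toReal_nonneg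
  linarith [keyr, keys, e1, e2, htvr,
    pos p (E₂ \ E₁), pos n (E₂ \ E₁), pos p (E₁ \ E₂), pos n (E₁ \ E₂)]
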